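/- Let Q₁, …, Q_K (K ≥ 2) be i.i.d. random variables with values in a finite set Ω and common distribution P, and define Ŝ^(K) = (1/(K(K−1))) Σ_{k ≠ k'} 1{Q_k = Q_{k'}}. Let P₂ = Σ_{q∈Ω} P(q)² and P₃ = Σ_{q∈Ω} P(q)³. Then: (i) E[Ŝ^(K)] = P₂; and (ii) Var[Ŝ^(K)] = [2 P₂(1 − P₂) + 4(K − 2)(P₃ − P₂²)] / (K(K − 1)). -/

import Mathlib

open Matrix MeasureTheory
open scoped BigOperators ComplexConjugate Kronecker

set_option linter.unusedSectionVars false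
set_option maxHeartbeats 1000000

section Helpers

variable {ι : Type*} [Fintype ι] [DecidableEq ι]

lemma prod_eq_of_one (s : Finset ι) (F : ι → ℝ) (h : ∀ i ∉ s, F i = 1) :
    ∏ i, F i = ∏ i ∈ s, F i :=
  (Finset.prod_subset (Finset.subset_univ s) (fun i _ hi => h i hi)).symm

lemma prod_two {k k' : ι} (h : k ≠ k') (F : ι → ℝ)
    (hF : ∀ i, i ≠ k → i ≠ k' → F i = 1) : ∏ i, F i = F k * F k' := by
  rw [prod_eq_of_one {k, k'} F (by
    intro i hi
    simp only [Finset.mem_insert, Finset.mem_singleton, not_or] at hi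
    exact hF i hi.1 hi.2)]
  rw [Finset.prod_pair h]

lemma prod_three {k k' l : ι} (h1 : k ≠ k') (h2 : k ≠ l) (h3 : k' ≠ l) (F : ι → ℝ)
    (hF : ∀ i, i ≠ k → i ≠ k' → i ≠ l → F i = 1) : ∏ i, F i = F k * (F k' * F l) := by
  rw [prod_eq_of_one {k, k', l} F (by
    intro i hi
    simp only [Finset.mem_insert, Finset.mem_singleton, not_or] at hi
    exact hF i hi.1 hi.2.1 hi.2.2)]
  rw [Finset.prod_insert (by simp [h1, h2]), Finset.prod_pair h3]

lemma prod_four {k k' l l' : ι} (h1 : k ≠ k') (h2 : k ≠ l) (h3 : k ≠ l') (h4 : k' ≠ l)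
    (h5 : k' ≠ l') (h6 : l ≠ l') (F : ι → ℝ)
    (hF : ∀ i, i ≠ k → i ≠ k' → i ≠ l → i ≠ l' → F i = 1) :
    ∏ i, F i = F k * (F k' * (F l * F l')) := by
  rw [prod_eq_of_one {k, k', l, l'} F (by
    intro i hi
    simp only [Finset.mem_insert, Finset.mem_singleton, not_or] at hi
    exact hF i hi.1 hi.2.1 hi.2.2.1 hi.2.2.2)]
  rw [Finset.prod_insert (by simp [h1, h2, h3]), Finset.prod_insert (by simp [h4, h5]),
    Finset.prod_pair h6]

end Helpers

section Ind

variable {Ω : Type*} [Fintype Ω] [DecidableEq Ω]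

lemma ind_comm (a b : Ω) : (if a = b then (1:ℝ) else 0) = if b = a then 1 else 0 := by
  by_cases h : a = b
  · simp [h]
  · simp [h, Ne.symm h]

lemma sum_ind2 (a b : Ω) :
    ∑ q : Ω, (if a = q then (1:ℝ) else 0) * (if b = q then 1 else 0)
      = if a = b then 1 else 0 := by
  rw [Finset.sum_eq_single a (fun q _ hq => by simp [Ne.symm hq]) (by simp)]
  rw [if_pos rfl, one_mul, ind_comm]

lemma sum_ind3 (a b c : Ω) :
    ∑ q : Ω, (if a = q then (1:ℝ) else 0) * ((if b = q then 1 else 0) * (if c = q then 1 else 0))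
      = (if a = b then 1 else 0) * (if a = c then 1 else 0) := by
  rw [Finset.sum_eq_single a (fun q _ hq => by simp [Ne.symm hq]) (by simp)]
  rw [if_pos rfl, one_mul, ind_comm b a, ind_comm c a]

end Ind

section SumSpecial

lemma sum_one_special {K : ℕ} (k : Fin K) (f : Fin K → ℝ) (a c : ℝ)
    (hk : f k = a) (ho : ∀ l, l ≠ k → f l = c) :
    ∑ l, f l = a + ((K:ℝ) - 1) * c := by
  have h : ∀ l, f l = (if l = k then a - c else 0) + c := by
    intro l
    by_cases h1 : l = k
    · subst h1; simp [hk]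
    · simp [h1, ho l h1]
  rw [Finset.sum_congr rfl fun l _ => h l, Finset.sum_add_distrib, Finset.sum_ite_eq',
    Finset.sum_const, Finset.card_univ, Fintype.card_fin]
  simp [nsmul_eq_mul]; ring

lemma sum_two_special {K : ℕ} {k k' : Fin K} (h : k ≠ k') (f : Fin K → ℝ) (a b c : ℝ)
    (hk : f k = a) (hk' : f k' = b) (ho : ∀ l, l ≠ k → l ≠ k' → f l = c) :
    ∑ l, f l = a + b + ((K:ℝ) - 2) * c := by
  have hh : ∀ l, f l = (if l = k then a - c else 0) + ((if l = k' then b - c else 0) + c) := by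
    intro l
    by_cases h1 : l = k
    · subst h1; simp [hk, h]
    · by_cases h2 : l = k'
      · subst h2; simp [hk', h1]
      · simp [h1, h2, ho l h1 h2]
  rw [Finset.sum_congr rfl fun l _ => hh l, Finset.sum_add_distrib, Finset.sum_add_distrib,
    Finset.sum_ite_eq', Finset.sum_ite_eq', Finset.sum_const, Finset.card_univ, Fintype.card_fin]
  simp [nsmul_eq_mul]; ring

lemma sum_three_special {K : ℕ} {k k' l : Fin K} (h1 : k ≠ k') (h2 : k ≠ l) (h3 : k' ≠ l)
    (f : Fin K → ℝ) (a b d c : ℝ)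
    (hk : f k = a) (hk' : f k' = b) (hl : f l = d)
    (ho : ∀ m, m ≠ k → m ≠ k' → m ≠ l → f m = c) :
    ∑ m, f m = a + b + d + ((K:ℝ) - 3) * c := by
  have hh : ∀ m, f m = (if m = k then a - c else 0) +
      ((if m = k' then b - c else 0) + ((if m = l then d - c else 0) + c)) := by
    intro m
    by_cases e1 : m = k
    · subst e1; simp [hk, h1, h2]
    · by_cases e2 : m = k'
      · subst e2; simp [hk', e1, h3]
      · by_cases e3 : m = l
        · subst e3; simp [hl, e1, e2]
        · simp [e1, e2, e3, ho m e1 e2 e3]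
  rw [Finset.sum_congr rfl fun m _ => hh m]
  rw [Finset.sum_add_distrib, Finset.sum_add_distrib, Finset.sum_add_distrib,
    Finset.sum_ite_eq', Finset.sum_ite_eq', Finset.sum_ite_eq', Finset.sum_const,
    Finset.card_univ, Fintype.card_fin]
  simp [nsmul_eq_mul]; ring

end SumSpecial

section Marg

variable {Ω : Type*} [Fintype Ω] [DecidableEq Ω] [MeasurableSpace Ω]
  [MeasurableSingletonClass Ω] (μ : Measure Ω) [IsProbabilityMeasure μ]

lemma sum_p : ∑ q : Ω, (μ {q}).toReal = 1 := by
  have h := integral_fintype (μ := μ) (f := fun _ : Ω => (1:ℝ)) (Integrable.of_finite)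
  simpa [measureReal_def] using h.symm

lemma marg2 {K : ℕ} {k k' : Fin K} (h : k ≠ k') :
    ∑ ω : Fin K → Ω, (∏ i, (μ {ω i}).toReal) * (if ω k = ω k' then (1:ℝ) else 0)
      = ∑ q : Ω, (μ {q}).toReal ^ 2 := by
  have key : ∀ ω : Fin K → Ω,
      (∏ i, (μ {ω i}).toReal) * (if ω k = ω k' then (1:ℝ) else 0)
        = ∑ q : Ω, ∏ i, ((μ {ω i}).toReal *
            (if i = k then (if ω i = q then 1 else 0)
             else if i = k' then (if ω i = q then 1 else 0) else 1)) := by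
    intro ω
    have hq : ∀ q : Ω, ∏ i, ((μ {ω i}).toReal *
        (if i = k then (if ω i = q then (1:ℝ) else 0)
         else if i = k' then (if ω i = q then 1 else 0) else 1))
        = (∏ i, (μ {ω i}).toReal) *
            ((if ω k = q then 1 else 0) * (if ω k' = q then 1 else 0)) := by
      intro q
      rw [Finset.prod_mul_distrib]
      congr 1
      rw [prod_two h _ (fun i h1 h2 => by simp [h1, h2])]
      simp [Ne.symm h]
    simp only [hq, ← Finset.mul_sum, sum_ind2]
  rw [Finset.sum_congr rfl fun ω _ => key ω, Finset.sum_comm]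
  refine Finset.sum_congr rfl fun q _ => ?_
  refine (Fintype.prod_sum (fun (i : Fin K) (x : Ω) => (μ {x}).toReal *
      (if i = k then (if x = q then (1:ℝ) else 0)
       else if i = k' then (if x = q then 1 else 0) else 1))).symm.trans ?_
  rw [prod_two h _ (fun i h1 h2 => by simp [h1, h2, sum_p μ])]
  simp [Ne.symm h, mul_ite, mul_one, mul_zero, Finset.sum_ite_eq', sq]

lemma marg3 {K : ℕ} {k k' l : Fin K} (h1 : k ≠ k') (h2 : k ≠ l) (h3 : k' ≠ l) :
    ∑ ω : Fin K → Ω, (∏ i, (μ {ω i}).toReal) *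
        ((if ω k = ω k' then (1:ℝ) else 0) * (if ω k = ω l then 1 else 0))
      = ∑ q : Ω, (μ {q}).toReal ^ 3 := by
  have key : ∀ ω : Fin K → Ω,
      (∏ i, (μ {ω i}).toReal) *
          ((if ω k = ω k' then (1:ℝ) else 0) * (if ω k = ω l then 1 else 0))
        = ∑ q : Ω, ∏ i, ((μ {ω i}).toReal *
            (if i = k then (if ω i = q then 1 else 0)
             else if i = k' then (if ω i = q then 1 else 0)
             else if i = l then (if ω i = q then 1 else 0) else 1)) := by
    intro ω
    have hq : ∀ q : Ω, ∏ i, ((μ {ω i}).toReal *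
        (if i = k then (if ω i = q then (1:ℝ) else 0)
         else if i = k' then (if ω i = q then 1 else 0)
         else if i = l then (if ω i = q then 1 else 0) else 1))
        = (∏ i, (μ {ω i}).toReal) *
            ((if ω k = q then 1 else 0) *
              ((if ω k' = q then 1 else 0) * (if ω l = q then 1 else 0))) := by
      intro q
      rw [Finset.prod_mul_distrib]
      congr 1
      rw [prod_three h1 h2 h3 _ (fun i e1 e2 e3 => by simp [e1, e2, e3])]
      simp [Ne.symm h1, Ne.symm h2, Ne.symm h3]
    simp only [hq, ← Finset.mul_sum, sum_ind3]
  rw [Finset.sum_congr rfl fun ω _ => key ω, Finset.sum_comm]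
  refine Finset.sum_congr rfl fun q _ => ?_
  refine (Fintype.prod_sum (fun (i : Fin K) (x : Ω) => (μ {x}).toReal *
      (if i = k then (if x = q then (1:ℝ) else 0)
       else if i = k' then (if x = q then 1 else 0)
       else if i = l then (if x = q then 1 else 0) else 1))).symm.trans ?_
  rw [prod_three h1 h2 h3 _ (fun i e1 e2 e3 => by simp [e1, e2, e3, sum_p μ])]
  simp [Ne.symm h1, Ne.symm h2, Ne.symm h3, mul_ite, mul_one, mul_zero, Finset.sum_ite_eq']
  ring

lemma marg4 {K : ℕ} {k k' l l' : Fin K} (h1 : k ≠ k') (h2 : k ≠ l) (h3 : k ≠ l')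
    (h4 : k' ≠ l) (h5 : k' ≠ l') (h6 : l ≠ l') :
    ∑ ω : Fin K → Ω, (∏ i, (μ {ω i}).toReal) *
        ((if ω k = ω k' then (1:ℝ) else 0) * (if ω l = ω l' then 1 else 0))
      = (∑ q : Ω, (μ {q}).toReal ^ 2) ^ 2 := by
  have key : ∀ ω : Fin K → Ω,
      (∏ i, (μ {ω i}).toReal) *
          ((if ω k = ω k' then (1:ℝ) else 0) * (if ω l = ω l' then 1 else 0))
        = ∑ q : Ω, ∑ r : Ω, ∏ i, ((μ {ω i}).toReal *
            (if i = k then (if ω i = q then 1 else 0)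
             else if i = k' then (if ω i = q then 1 else 0)
             else if i = l then (if ω i = r then 1 else 0)
             else if i = l' then (if ω i = r then 1 else 0) else 1)) := by
    intro ω
    have hq : ∀ q r : Ω, ∏ i, ((μ {ω i}).toReal *
        (if i = k then (if ω i = q then (1:ℝ) else 0)
         else if i = k' then (if ω i = q then 1 else 0)
         else if i = l then (if ω i = r then 1 else 0)
         else if i = l' then (if ω i = r then 1 else 0) else 1))
        = (∏ i, (μ {ω i}).toReal) *
            ((if ω k = q then 1 else 0) *
              ((if ω k' = q then 1 else 0) *
                ((if ω l = r then 1 else 0) * (if ω l' = r then 1 else 0)))) := by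
      intro q r
      rw [Finset.prod_mul_distrib]
      congr 1
      rw [prod_four h1 h2 h3 h4 h5 h6 _ (fun i e1 e2 e3 e4 => by simp [e1, e2, e3, e4])]
      simp [Ne.symm h1, Ne.symm h2, Ne.symm h3, Ne.symm h4, Ne.symm h5, Ne.symm h6]
    rw [← sum_ind2 (ω k) (ω k'), ← sum_ind2 (ω l) (ω l'), Finset.sum_mul_sum]
    simp only [Finset.mul_sum]
    refine Finset.sum_congr rfl fun q _ => Finset.sum_congr rfl fun r _ => ?_
    rw [hq q r]
    ring
  rw [Finset.sum_congr rfl fun ω _ => key ω, Finset.sum_comm]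
  refine (Finset.sum_congr rfl fun q _ => Finset.sum_comm).trans ?_
  have hfin : ∀ q r : Ω,
      (∑ ω : Fin K → Ω, ∏ i, ((μ {ω i}).toReal *
        (if i = k then (if ω i = q then (1:ℝ) else 0)
         else if i = k' then (if ω i = q then 1 else 0)
         else if i = l then (if ω i = r then 1 else 0)
         else if i = l' then (if ω i = r then 1 else 0) else 1)))
      = (μ {q}).toReal ^ 2 * (μ {r}).toReal ^ 2 := by
    intro q r
    refine (Fintype.prod_sum (fun (i : Fin K) (x : Ω) => (μ {x}).toReal *
        (if i = k then (if x = q then (1:ℝ) else 0)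
         else if i = k' then (if x = q then 1 else 0)
         else if i = l then (if x = r then 1 else 0)
         else if i = l' then (if x = r then 1 else 0) else 1))).symm.trans ?_
    rw [prod_four h1 h2 h3 h4 h5 h6 _ (fun i e1 e2 e3 e4 => by simp [e1, e2, e3, e4, sum_p μ])]
    simp [Ne.symm h1, Ne.symm h2, Ne.symm h3, Ne.symm h4, Ne.symm h5, Ne.symm h6,
      mul_ite, mul_one, mul_zero, Finset.sum_ite_eq']
    ring
  refine (Finset.sum_congr rfl fun q _ => Finset.sum_congr rfl fun r _ => hfin q r).trans ?_
  rw [← Finset.sum_mul_sum, sq]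

end Marg

section Swap

lemma sum_swap3 {α β γ : Type*} [Fintype α] [Fintype β] [Fintype γ] (F : α → β → γ → ℝ) :
    ∑ a, ∑ b, ∑ c, F a b c = ∑ b, ∑ c, ∑ a, F a b c := by
  rw [Finset.sum_comm]
  exact Finset.sum_congr rfl fun b _ => Finset.sum_comm

lemma sum_swap5 {α β γ δ ε : Type*} [Fintype α] [Fintype β] [Fintype γ] [Fintype δ] [Fintype ε]
    (F : α → β → γ → δ → ε → ℝ) :
    ∑ a, ∑ b, ∑ c, ∑ d, ∑ e, F a b c d e = ∑ b, ∑ c, ∑ d, ∑ e, ∑ a, F a b c d e := by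
  rw [Finset.sum_comm]
  refine Finset.sum_congr rfl fun b _ => ?_
  rw [Finset.sum_comm]
  refine Finset.sum_congr rfl fun c _ => ?_
  rw [Finset.sum_comm]
  refine Finset.sum_congr rfl fun d _ => ?_
  exact Finset.sum_comm

end Swap

section Main

variable {Ω : Type*} [Fintype Ω] [DecidableEq Ω] [MeasurableSpace Ω]
  [MeasurableSingletonClass Ω] (μ : Measure Ω) [IsProbabilityMeasure μ]

lemma Vterm_eval {K : ℕ} {k k' : Fin K} (h : k ≠ k') :
    (∑ l : Fin K, ∑ l' : Fin K, ∑ ω : Fin K → Ω, (∏ i, (μ {ω i}).toReal) *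
      ((if k ≠ k' ∧ ω k = ω k' then (1:ℝ) else 0) * (if l ≠ l' ∧ ω l = ω l' then 1 else 0)))
    = 2 * (∑ q : Ω, (μ {q}).toReal ^ 2) + 4 * ((K:ℝ) - 2) * (∑ q : Ω, (μ {q}).toReal ^ 3)
      + ((K:ℝ) - 2) * ((K:ℝ) - 3) * (∑ q : Ω, (μ {q}).toReal ^ 2) ^ 2 := by
  refine (sum_two_special h _
      ((∑ q : Ω, (μ {q}).toReal ^ 2) + ((K:ℝ) - 2) * (∑ q : Ω, (μ {q}).toReal ^ 3))
      ((∑ q : Ω, (μ {q}).toReal ^ 2) + ((K:ℝ) - 2) * (∑ q : Ω, (μ {q}).toReal ^ 3))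
      (2 * (∑ q : Ω, (μ {q}).toReal ^ 3) + ((K:ℝ) - 3) * (∑ q : Ω, (μ {q}).toReal ^ 2) ^ 2)
      ?_ ?_ ?_).trans (by ring)
  · -- l = k
    refine (sum_two_special h _ 0 (∑ q : Ω, (μ {q}).toReal ^ 2) (∑ q : Ω, (μ {q}).toReal ^ 3)
        ?_ ?_ ?_).trans (by ring)
    · simp
    · -- l' = k'
      have hpt : ∀ ω : Fin K → Ω,
          (∏ i, (μ {ω i}).toReal) *
            ((if k ≠ k' ∧ ω k = ω k' then (1:ℝ) else 0) * (if k ≠ k' ∧ ω k = ω k' then 1 else 0))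
          = (∏ i, (μ {ω i}).toReal) * (if ω k = ω k' then 1 else 0) := by
        intro ω; by_cases hc : ω k = ω k' <;> simp [hc, h]
      rw [Finset.sum_congr rfl fun ω _ => hpt ω]
      exact marg2 μ h
    · -- l' ∉ {k, k'}
      intro l' h1 h2
      have hpt : ∀ ω : Fin K → Ω,
          (∏ i, (μ {ω i}).toReal) *
            ((if k ≠ k' ∧ ω k = ω k' then (1:ℝ) else 0) * (if k ≠ l' ∧ ω k = ω l' then 1 else 0))
          = (∏ i, (μ {ω i}).toReal) *
            ((if ω k = ω k' then 1 else 0) * (if ω k = ω l' then 1 else 0)) := by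
        intro ω; simp [h, Ne.symm h1]
      rw [Finset.sum_congr rfl fun ω _ => hpt ω]
      exact marg3 μ h (Ne.symm h1) (Ne.symm h2)
  · -- l = k'
    refine (sum_two_special h _ (∑ q : Ω, (μ {q}).toReal ^ 2) 0 (∑ q : Ω, (μ {q}).toReal ^ 3)
        ?_ ?_ ?_).trans (by ring)
    · -- l' = k
      have hpt : ∀ ω : Fin K → Ω,
          (∏ i, (μ {ω i}).toReal) *
            ((if k ≠ k' ∧ ω k = ω k' then (1:ℝ) else 0) * (if k' ≠ k ∧ ω k' = ω k then 1 else 0))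
          = (∏ i, (μ {ω i}).toReal) * (if ω k = ω k' then 1 else 0) := by
        intro ω
        by_cases hc : ω k = ω k'
        · rw [if_pos ⟨h, hc⟩, if_pos ⟨Ne.symm h, hc.symm⟩, if_pos hc]; ring
        · rw [if_neg (fun hh => hc hh.2), if_neg hc]; ring
      rw [Finset.sum_congr rfl fun ω _ => hpt ω]
      exact marg2 μ h
    · simp
    · -- l' ∉ {k, k'}
      intro l' h1 h2
      have hpt : ∀ ω : Fin K → Ω,
          (∏ i, (μ {ω i}).toReal) *
            ((if k ≠ k' ∧ ω k = ω k' then (1:ℝ) else 0) * (if k' ≠ l' ∧ ω k' = ω l' then 1 else 0))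
          = (∏ i, (μ {ω i}).toReal) *
            ((if ω k' = ω k then 1 else 0) * (if ω k' = ω l' then 1 else 0)) := by
        intro ω
        simp only [ne_eq, h, not_false_eq_true, true_and, Ne.symm h2, ind_comm (ω k) (ω k')]
      rw [Finset.sum_congr rfl fun ω _ => hpt ω]
      exact marg3 μ (Ne.symm h) (Ne.symm h2) (Ne.symm h1)
  · -- l ∉ {k, k'}
    intro l hl1 hl2
    refine (sum_three_special h (Ne.symm hl1) (Ne.symm hl2) _
        (∑ q : Ω, (μ {q}).toReal ^ 3) (∑ q : Ω, (μ {q}).toReal ^ 3) 0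
        ((∑ q : Ω, (μ {q}).toReal ^ 2) ^ 2) ?_ ?_ ?_ ?_).trans (by ring)
    · -- l' = k
      have hpt : ∀ ω : Fin K → Ω,
          (∏ i, (μ {ω i}).toReal) *
            ((if k ≠ k' ∧ ω k = ω k' then (1:ℝ) else 0) * (if l ≠ k ∧ ω l = ω k then 1 else 0))
          = (∏ i, (μ {ω i}).toReal) *
            ((if ω k = ω k' then 1 else 0) * (if ω k = ω l then 1 else 0)) := by
        intro ω
        simp only [ne_eq, h, not_false_eq_true, true_and, hl1, ind_comm (ω l) (ω k)]
      rw [Finset.sum_congr rfl fun ω _ => hpt ω]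
      exact marg3 μ h (Ne.symm hl1) (Ne.symm hl2)
    · -- l' = k'
      have hpt : ∀ ω : Fin K → Ω,
          (∏ i, (μ {ω i}).toReal) *
            ((if k ≠ k' ∧ ω k = ω k' then (1:ℝ) else 0) * (if l ≠ k' ∧ ω l = ω k' then 1 else 0))
          = (∏ i, (μ {ω i}).toReal) *
            ((if ω k' = ω k then 1 else 0) * (if ω k' = ω l then 1 else 0)) := by
        intro ω
        simp only [ne_eq, h, not_false_eq_true, true_and, hl2,
          ind_comm (ω k) (ω k'), ind_comm (ω l) (ω k')]
      rw [Finset.sum_congr rfl fun ω _ => hpt ω]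
      exact marg3 μ (Ne.symm h) (Ne.symm hl2) (Ne.symm hl1)
    · simp
    · -- l' ∉ {k, k', l}
      intro l' m1 m2 m3
      have hpt : ∀ ω : Fin K → Ω,
          (∏ i, (μ {ω i}).toReal) *
            ((if k ≠ k' ∧ ω k = ω k' then (1:ℝ) else 0) * (if l ≠ l' ∧ ω l = ω l' then 1 else 0))
          = (∏ i, (μ {ω i}).toReal) *
            ((if ω k = ω k' then 1 else 0) * (if ω l = ω l' then 1 else 0)) := by
        intro ω
        simp only [ne_eq, h, not_false_eq_true, true_and, Ne.symm m3]
      rw [Finset.sum_congr rfl fun ω _ => hpt ω]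
      exact marg4 μ h (Ne.symm hl1) (Ne.symm m1) (Ne.symm hl2) (Ne.symm m2) (Ne.symm m3)

end Main

/-- **Mean and variance of the collision estimator** `Ŝ^{(K)} = (1/(K(K−1))) ∑_{k≠k'} 1{Q_k = Q_{k'}}`
for `K` i.i.d. samples from a distribution on a finite set:
`E[Ŝ^{(K)}] = P₂` and `Var[Ŝ^{(K)}] = [2P₂(1−P₂) + 4(K−2)(P₃−P₂²)]/(K(K−1))`. -/
theorem collision_estimator_mean_variance {Ω : Type*} [Fintype Ω] [DecidableEq Ω]
    [MeasurableSpace Ω] [MeasurableSingletonClass Ω]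
    (μ : Measure Ω) [IsProbabilityMeasure μ] (K : ℕ) (hK : 2 ≤ K)
    (P2 P3 : ℝ)
    (hP2 : P2 = ∑ q : Ω, ((μ {q}).toReal) ^ 2)
    (hP3 : P3 = ∑ q : Ω, ((μ {q}).toReal) ^ 3) :
    (∫ ω : Fin K → Ω,
        ((1 / ((K : ℝ) * ((K : ℝ) - 1))) * ∑ k : Fin K, ∑ k' : Fin K,
          if k ≠ k' ∧ ω k = ω k' then 1 else 0)
      ∂(Measure.pi fun _ : Fin K => μ)) = P2 ∧
    ProbabilityTheory.variance
        (fun ω : Fin K → Ω =>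
          (1 / ((K : ℝ) * ((K : ℝ) - 1))) * ∑ k : Fin K, ∑ k' : Fin K,
            if k ≠ k' ∧ ω k = ω k' then 1 else 0)
        (Measure.pi fun _ : Fin K => μ)
      = (2 * P2 * (1 - P2) + 4 * ((K : ℝ) - 2) * (P3 - P2 ^ 2))
          / ((K : ℝ) * ((K : ℝ) - 1)) := by
  subst hP2 hP3
  have hKR : (2:ℝ) ≤ (K:ℝ) := by exact_mod_cast hK
  have hK0 : (K:ℝ) ≠ 0 := by linarith
  have hK1 : (K:ℝ) - 1 ≠ 0 := by intro h; rw [sub_eq_zero] at h; linarith [h]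
  have hsing : ∀ ω : Fin K → Ω,
      ((Measure.pi fun _ : Fin K => μ) {ω}).toReal = ∏ i, (μ {ω i}).toReal := by
    intro ω
    rw [← Set.univ_pi_singleton, Measure.pi_pi, ENNReal.toReal_prod]
  have hInt : ∀ f : (Fin K → Ω) → ℝ,
      (∫ ω, f ω ∂(Measure.pi fun _ : Fin K => μ))
        = ∑ ω : Fin K → Ω, (∏ i, (μ {ω i}).toReal) * f ω := by
    intro f
    rw [integral_fintype (Integrable.of_finite)]
    exact Finset.sum_congr rfl fun ω _ => by rw [smul_eq_mul, measureReal_def, hsing ω]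
  -- mean in sum form
  have hE : ∀ k k' : Fin K,
      (∑ ω : Fin K → Ω, (∏ i, (μ {ω i}).toReal) *
          (if k ≠ k' ∧ ω k = ω k' then (1:ℝ) else 0))
        = if k = k' then 0 else ∑ q : Ω, (μ {q}).toReal ^ 2 := by
    intro k k'
    by_cases h : k = k'
    · simp [h]
    · rw [if_neg h]
      have hpt : ∀ ω : Fin K → Ω,
          (∏ i, (μ {ω i}).toReal) * (if k ≠ k' ∧ ω k = ω k' then (1:ℝ) else 0)
            = (∏ i, (μ {ω i}).toReal) * (if ω k = ω k' then 1 else 0) := by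
        intro ω; simp [h]
      rw [Finset.sum_congr rfl fun ω _ => hpt ω]
      exact marg2 μ h
  have hmeanSum : (∑ ω : Fin K → Ω, (∏ i, (μ {ω i}).toReal) *
        ((1 / ((K : ℝ) * ((K : ℝ) - 1))) * ∑ k : Fin K, ∑ k' : Fin K,
          if k ≠ k' ∧ ω k = ω k' then 1 else 0))
      = ∑ q : Ω, (μ {q}).toReal ^ 2 := by
    have hpt : ∀ ω : Fin K → Ω, (∏ i, (μ {ω i}).toReal) *
          ((1 / ((K : ℝ) * ((K : ℝ) - 1))) * ∑ k : Fin K, ∑ k' : Fin K,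
            if k ≠ k' ∧ ω k = ω k' then (1:ℝ) else 0)
        = (1 / ((K : ℝ) * ((K : ℝ) - 1))) * ∑ k : Fin K, ∑ k' : Fin K,
            (∏ i, (μ {ω i}).toReal) * (if k ≠ k' ∧ ω k = ω k' then (1:ℝ) else 0) := by
      intro ω
      rw [mul_left_comm]
      congr 1
      simp only [Finset.mul_sum]
    rw [Finset.sum_congr rfl fun ω _ => hpt ω, ← Finset.mul_sum]
    rw [sum_swap3 (fun (ω : Fin K → Ω) (k : Fin K) (k' : Fin K) =>
      (∏ i, (μ {ω i}).toReal) * (if k ≠ k' ∧ ω k = ω k' then (1:ℝ) else 0))]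
    rw [Finset.sum_congr rfl fun k _ => Finset.sum_congr rfl fun k' _ => hE k k']
    have h1 : ∀ k : Fin K, (∑ k' : Fin K,
        if k = k' then (0:ℝ) else ∑ q : Ω, (μ {q}).toReal ^ 2)
        = ((K:ℝ) - 1) * ∑ q : Ω, (μ {q}).toReal ^ 2 := by
      intro k
      refine (sum_one_special k _ 0 (∑ q : Ω, (μ {q}).toReal ^ 2) (by simp)
        (fun l hl => by simp [Ne.symm hl])).trans (by ring)
    rw [Finset.sum_congr rfl fun k _ => h1 k, Finset.sum_const, Finset.card_univ,
      Fintype.card_fin, nsmul_eq_mul]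
    field_simp
  constructor
  · rw [hInt]; exact hmeanSum
  · rw [ProbabilityTheory.variance_eq_sub MemLp.of_discrete]
    have hT2 : ∀ ω : Fin K → Ω,
        ((∑ k : Fin K, ∑ k' : Fin K, if k ≠ k' ∧ ω k = ω k' then (1:ℝ) else 0)) ^ 2
          = ∑ k : Fin K, ∑ k' : Fin K, ∑ l : Fin K, ∑ l' : Fin K,
              (if k ≠ k' ∧ ω k = ω k' then (1:ℝ) else 0) *
                (if l ≠ l' ∧ ω l = ω l' then 1 else 0) := by
      intro ω
      rw [sq, Finset.sum_mul_sum]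
      refine Finset.sum_congr rfl fun k _ => ?_
      rw [Finset.sum_congr rfl fun l (_ : l ∈ Finset.univ) => Finset.sum_mul_sum
        Finset.univ Finset.univ (fun k' => if k ≠ k' ∧ ω k = ω k' then (1:ℝ) else 0)
        (fun l' => if l ≠ l' ∧ ω l = ω l' then (1:ℝ) else 0)]
      exact Finset.sum_comm
    have hpt2 : ∀ ω : Fin K → Ω, (∏ i, (μ {ω i}).toReal) *
          ((1 / ((K : ℝ) * ((K : ℝ) - 1))) * ∑ k : Fin K, ∑ k' : Fin K,
            if k ≠ k' ∧ ω k = ω k' then (1:ℝ) else 0) ^ 2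
        = (1 / ((K : ℝ) * ((K : ℝ) - 1))) ^ 2 *
            ∑ k : Fin K, ∑ k' : Fin K, ∑ l : Fin K, ∑ l' : Fin K,
              (∏ i, (μ {ω i}).toReal) *
                ((if k ≠ k' ∧ ω k = ω k' then (1:ℝ) else 0) *
                  (if l ≠ l' ∧ ω l = ω l' then 1 else 0)) := by
      intro ω
      rw [mul_pow, hT2 ω, mul_left_comm]
      congr 1
      simp only [Finset.mul_sum]
    have hsum2 : (∑ ω : Fin K → Ω, (∏ i, (μ {ω i}).toReal) *
          ((1 / ((K : ℝ) * ((K : ℝ) - 1))) * ∑ k : Fin K, ∑ k' : Fin K,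
            if k ≠ k' ∧ ω k = ω k' then (1:ℝ) else 0) ^ 2)
        = (1 / ((K : ℝ) * ((K : ℝ) - 1))) ^ 2 * ((K:ℝ) * (((K:ℝ) - 1) *
            (2 * (∑ q : Ω, (μ {q}).toReal ^ 2)
              + 4 * ((K:ℝ) - 2) * (∑ q : Ω, (μ {q}).toReal ^ 3)
              + ((K:ℝ) - 2) * ((K:ℝ) - 3) * (∑ q : Ω, (μ {q}).toReal ^ 2) ^ 2))) := by
      rw [Finset.sum_congr rfl fun ω _ => hpt2 ω, ← Finset.mul_sum]
      congr 1
      rw [sum_swap5 (fun (ω : Fin K → Ω) (k k' l l' : Fin K) =>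
        (∏ i, (μ {ω i}).toReal) *
          ((if k ≠ k' ∧ ω k = ω k' then (1:ℝ) else 0) *
            (if l ≠ l' ∧ ω l = ω l' then 1 else 0)))]
      have hout : ∀ k : Fin K, (∑ k' : Fin K, ∑ l : Fin K, ∑ l' : Fin K,
          ∑ ω : Fin K → Ω, (∏ i, (μ {ω i}).toReal) *
            ((if k ≠ k' ∧ ω k = ω k' then (1:ℝ) else 0) *
              (if l ≠ l' ∧ ω l = ω l' then 1 else 0)))
          = ((K:ℝ) - 1) * (2 * (∑ q : Ω, (μ {q}).toReal ^ 2)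
              + 4 * ((K:ℝ) - 2) * (∑ q : Ω, (μ {q}).toReal ^ 3)
              + ((K:ℝ) - 2) * ((K:ℝ) - 3) * (∑ q : Ω, (μ {q}).toReal ^ 2) ^ 2) := by
        intro k
        refine (sum_one_special k _ 0
          (2 * (∑ q : Ω, (μ {q}).toReal ^ 2)
            + 4 * ((K:ℝ) - 2) * (∑ q : Ω, (μ {q}).toReal ^ 3)
            + ((K:ℝ) - 2) * ((K:ℝ) - 3) * (∑ q : Ω, (μ {q}).toReal ^ 2) ^ 2)
          (by simp) (fun k' hk' => Vterm_eval μ (Ne.symm hk'))).trans (by ring)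
      rw [Finset.sum_congr rfl fun k _ => hout k, Finset.sum_const, Finset.card_univ,
        Fintype.card_fin, nsmul_eq_mul]
    simp only [Pi.pow_apply]
    rw [hInt, hInt, hmeanSum, hsum2]
    field_simp
    ring
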